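/- For all real numbers u, v and p ∈ (1,2), |u+v|^p ≤ |u|^p + |v|^p + p·|v|^(p-1)·|u|. -/

import Mathlib

private lemma rpow_subadd {x b q : ℝ} (hx : 0 ≤ x) (hb : 0 ≤ b) (hq : 0 ≤ q) (hq1 : q ≤ 1) :
    (x + b) ^ q ≤ x ^ q + b ^ q := by
  have h := NNReal.rpow_add_le_add_rpow ⟨x, hx⟩ ⟨b, hb⟩ hq hq1
  have := NNReal.coe_le_coe.2 h
  exact this

private lemma key_ineq {a b p : ℝ} (ha : 0 ≤ a) (hb : 0 ≤ b) (hp1 : 1 < p) (hp2 : p < 2) :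
    (a + b) ^ p ≤ a ^ p + b ^ p + p * b ^ (p - 1) * a := by
  set f : ℝ → ℝ := fun x => x ^ p + b ^ p + p * b ^ (p - 1) * x - (x + b) ^ p with hf
  have hp0 : 0 < p := by linarith
  have hderiv : ∀ x : ℝ, HasDerivAt f
      (p * x ^ (p - 1) + p * b ^ (p - 1) - p * (x + b) ^ (p - 1)) x := by
    intro x
    have h1 : HasDerivAt (fun x : ℝ => x ^ p) (p * x ^ (p - 1)) x :=
      Real.hasDerivAt_rpow_const (Or.inr hp1.le)
    have h2 : HasDerivAt (fun x : ℝ => (x + b) ^ p) (p * (x + b) ^ (p - 1)) x := by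
      have h3 : HasDerivAt (fun x : ℝ => x + b) 1 x := (hasDerivAt_id x).add_const b
      have := (Real.hasDerivAt_rpow_const (x := x + b) (p := p) (Or.inr hp1.le)).comp x h3
      simpa [Function.comp_def] using this
    have h4 : HasDerivAt (fun x : ℝ => x ^ p + b ^ p + p * b ^ (p - 1) * x)
        (p * x ^ (p - 1) + p * b ^ (p - 1)) x := by
      have := ((h1.add_const (b ^ p)).add
        (((hasDerivAt_id x).const_mul (p * b ^ (p - 1)))))
      simpa [mul_one, Pi.add_def] using this
    simpa [hf, Pi.sub_def] using h4.sub h2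
  have hmono : MonotoneOn f (Set.Ici (0 : ℝ)) := by
    apply monotoneOn_of_deriv_nonneg (convex_Ici 0)
    · exact fun x _ => ((hderiv x).continuousAt).continuousWithinAt
    · intro x hx
      exact ((hderiv x).differentiableAt).differentiableWithinAt
    · intro x hx
      rw [interior_Ici] at hx
      rw [(hderiv x).deriv]
      have hsub : (x + b) ^ (p - 1) ≤ x ^ (p - 1) + b ^ (p - 1) :=
        rpow_subadd (le_of_lt hx) hb (by linarith) (by linarith)
      nlinarith [hsub]
  have h0 : f 0 ≤ f a := hmono Set.self_mem_Ici ha ha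
  have hf0 : f 0 = 0 := by
    simp [hf, Real.zero_rpow (ne_of_gt hp0)]
  rw [hf0] at h0
  simp only [hf] at h0
  linarith

theorem rpow_add_le_of_lt_two (u v p : ℝ) (hp1 : 1 < p) (hp2 : p < 2) :
    |u + v| ^ p ≤ |u| ^ p + |v| ^ p + p * |v| ^ (p - 1) * |u| := by
  have h1 : |u + v| ^ p ≤ (|u| + |v|) ^ p :=
    Real.rpow_le_rpow (abs_nonneg _) (abs_add_le u v) (by linarith)
  calc |u + v| ^ p ≤ (|u| + |v|) ^ p := h1
    _ ≤ |u| ^ p + |v| ^ p + p * |v| ^ (p - 1) * |u| :=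
        key_ineq (abs_nonneg u) (abs_nonneg v) hp1 hp2
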